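/- Let V be a real vector space of dimension 2m (with m ≥ 1) and let ω be a nondegenerate alternating bilinear form on V, regarded as an element of Λ²V*. Then the linear map ε(ω) : Λ^{m-1} V* → Λ^{m+1} V* given by exterior multiplication α ↦ ω ∧ α is a linear isomorphism. -/

import Mathlib

set_option synthInstance.maxHeartbeats 1000000
set_option maxHeartbeats 2000000

/-- The alternating `2`-form `(φ, ψ) ↦ φ(v)ψ(w) - ψ(v)φ(w)` on the dual space, used to
evaluate elements of `Λ² V*` against a pair of vectors `v, w ∈ V`. -/
noncomputable def evalPair {V : Type*} [AddCommGroup V] [Module ℝ V] (v w : V) :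
    (Module.Dual ℝ V) [⋀^Fin 2]→ₗ[ℝ] ℝ :=
  MultilinearMap.alternatization
    ((MultilinearMap.mkPiAlgebra ℝ (Fin 2) ℝ).compLinearMap
      ![Module.Dual.eval ℝ V v, Module.Dual.eval ℝ V w])

/-- Evaluation of an element of the exterior algebra of `V*` (thought of in degree `2`) against
a pair of vectors `v, w ∈ V`; this realizes an element of `Λ² V*` as a bilinear form on `V`. -/
noncomputable def asBilinForm {V : Type*} [AddCommGroup V] [Module ℝ V]
    (Ω : ExteriorAlgebra ℝ (Module.Dual ℝ V)) (v w : V) : ℝ :=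
  ExteriorAlgebra.liftAlternating
    (fun i => match i with
      | 2 => evalPair v w
      | _ => 0) Ω

namespace WedgeAux

variable {V : Type*} [AddCommGroup V] [Module ℝ V]

local notation "W" => Module.Dual ℝ V
local notation "E" => ExteriorAlgebra ℝ (Module.Dual ℝ V)

noncomputable def contract (u : Module.Dual ℝ (Module.Dual ℝ V)) :
    E →ₗ[ℝ] E := CliffordAlgebra.contractLeft u

lemma contract_ι_mul (u : Module.Dual ℝ (Module.Dual ℝ V)) (a : W) (y : E) :
    contract u (ExteriorAlgebra.ι ℝ a * y)
      = u a • y - ExteriorAlgebra.ι ℝ a * contract u y :=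
  CliffordAlgebra.contractLeft_ι_mul (Q := (0 : QuadraticForm ℝ (Module.Dual ℝ V))) (d := u) a y

lemma contract_algebraMap (u : Module.Dual ℝ (Module.Dual ℝ V)) (r : ℝ) :
    contract u (algebraMap ℝ E r) = 0 :=
  CliffordAlgebra.contractLeft_algebraMap _ u r

lemma ι_mem_pow_one (a : W) : ExteriorAlgebra.ι ℝ a ∈ ⋀[ℝ]^1 W := by
  rw [show (⋀[ℝ]^1 W) = LinearMap.range (ExteriorAlgebra.ι ℝ : W →ₗ[ℝ] E) from pow_one _]
  exact LinearMap.mem_range_self _ a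

lemma mul_mem_pow {p q : ℕ} {x y : E} (hx : x ∈ ⋀[ℝ]^p W) (hy : y ∈ ⋀[ℝ]^q W) :
    x * y ∈ ⋀[ℝ]^(p+q) W := by
  rw [show (⋀[ℝ]^(p+q) W) = (⋀[ℝ]^p W) * (⋀[ℝ]^q W) from pow_add _ p q]
  exact Submodule.mul_mem_mul hx hy

lemma contract_eq_zero_of_mem_pow_zero (u : Module.Dual ℝ (Module.Dual ℝ V)) {x : E}
    (hx : x ∈ ⋀[ℝ]^0 W) : contract u x = 0 := by
  rw [show (⋀[ℝ]^0 W) = (1 : Submodule ℝ E) from pow_zero _] at hx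
  obtain ⟨r, rfl⟩ := Submodule.mem_one.mp hx
  exact contract_algebraMap u r

lemma pow_succ_induction (k : ℕ) {p : E → Prop} (h0 : p 0)
    (hadd : ∀ x y, p x → p y → p (x + y))
    (hsmul : ∀ (r : ℝ) (x), p x → p (r • x))
    (hgen : ∀ (c : W) (y : E), y ∈ ⋀[ℝ]^k W → p (ExteriorAlgebra.ι ℝ c * y)) :
    ∀ x ∈ ⋀[ℝ]^(k+1) W, p x := by
  intro x hx
  rw [← ExteriorAlgebra.ιMulti_span_fixedDegree] at hx
  refine Submodule.span_induction ?_ h0 (fun a b _ _ ha hb => hadd a b ha hb)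
    (fun r a _ ha => hsmul r a ha) hx
  rintro _ ⟨f, rfl⟩
  rw [ExteriorAlgebra.ιMulti_succ_apply]
  exact hgen _ _ (ExteriorAlgebra.ιMulti_range ℝ k (Set.mem_range_self _))

lemma contract_mem_pow (k : ℕ) (u : Module.Dual ℝ (Module.Dual ℝ V)) :
    ∀ x ∈ ⋀[ℝ]^(k+1) W, contract u x ∈ ⋀[ℝ]^k W := by
  induction k with
  | zero =>
    refine pow_succ_induction 0 (by simp) (fun x y hx hy => ?_) (fun r x hx => ?_)
      (fun c y hy => ?_)
    · rw [map_add]; exact Submodule.add_mem _ hx hy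
    · rw [map_smul]; exact Submodule.smul_mem _ _ hx
    · rw [contract_ι_mul, contract_eq_zero_of_mem_pow_zero u hy, mul_zero, sub_zero]
      exact Submodule.smul_mem _ _ hy
  | succ k ih =>
    refine pow_succ_induction (k+1) (by simp) (fun x y hx hy => ?_) (fun r x hx => ?_)
      (fun c y hy => ?_)
    · rw [map_add]; exact Submodule.add_mem _ hx hy
    · rw [map_smul]; exact Submodule.smul_mem _ _ hx
    · rw [contract_ι_mul]
      refine Submodule.sub_mem _ (Submodule.smul_mem _ _ hy) ?_
      have := mul_mem_pow (ι_mem_pow_one c) (ih _ hy)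
      rwa [Nat.add_comm] at this

lemma euler_op {n : ℕ} (wv : Fin n → W) (u : Fin n → Module.Dual ℝ (Module.Dual ℝ V))
    (hres : ∀ x : W, ∑ a, u a x • wv a = x) :
    ∀ (k : ℕ) (x : E), x ∈ ⋀[ℝ]^k W →
      ∑ a, ExteriorAlgebra.ι ℝ (wv a) * contract (u a) x = (k : ℝ) • x := by
  intro k
  induction k with
  | zero =>
    intro x hx
    rw [show (⋀[ℝ]^0 W) = (1 : Submodule ℝ E) from pow_zero _] at hx
    obtain ⟨r, rfl⟩ := Submodule.mem_one.mp hx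
    simp [contract_algebraMap]
  | succ k ih =>
    refine pow_succ_induction k (by simp) (fun x y hx hy => ?_) (fun r x hx => ?_)
      (fun c y hy => ?_)
    · simp only [map_add, mul_add, Finset.sum_add_distrib, smul_add, hx, hy]
    · simp only [map_smul, mul_smul_comm]
      rw [← Finset.smul_sum, hx, smul_comm]
    · have key : ∀ a, ExteriorAlgebra.ι ℝ (wv a) * contract (u a)
          (ExteriorAlgebra.ι ℝ c * y)
          = u a c • (ExteriorAlgebra.ι ℝ (wv a) * y)
            + ExteriorAlgebra.ι ℝ c * (ExteriorAlgebra.ι ℝ (wv a) * contract (u a) y) := by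
        intro a
        rw [contract_ι_mul, mul_sub, mul_smul_comm, ← mul_assoc]
        have hswap : ExteriorAlgebra.ι ℝ (wv a) * ExteriorAlgebra.ι ℝ c
            = -(ExteriorAlgebra.ι ℝ c * ExteriorAlgebra.ι ℝ (wv a)) := by
          rw [eq_neg_iff_add_eq_zero, ExteriorAlgebra.ι_add_mul_swap]
        rw [hswap, neg_mul, sub_neg_eq_add, mul_assoc]
      rw [Finset.sum_congr rfl (fun a _ => key a)]
      rw [Finset.sum_add_distrib, ← Finset.mul_sum, ih y hy]
      have h1 : ∑ a, u a c • (ExteriorAlgebra.ι ℝ (wv a) * y)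
          = ExteriorAlgebra.ι ℝ c * y := by
        calc ∑ a, u a c • (ExteriorAlgebra.ι ℝ (wv a) * y)
            = (∑ a, u a c • ExteriorAlgebra.ι ℝ (wv a)) * y := by
              rw [Finset.sum_mul]; simp [smul_mul_assoc]
          _ = ExteriorAlgebra.ι ℝ (∑ a, u a c • wv a) * y := by
              rw [map_sum]; simp
          _ = _ := by rw [hres]
      rw [h1, mul_smul_comm]
      push_cast
      rw [add_smul, one_smul, add_comm]

lemma asBilinForm_add (x y : E) (v w : V) :
    asBilinForm (x + y) v w = asBilinForm x v w + asBilinForm y v w := by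
  simp [asBilinForm]

lemma asBilinForm_smul (r : ℝ) (x : E) (v w : V) :
    asBilinForm (r • x) v w = r * asBilinForm x v w := by
  simp [asBilinForm]

lemma evalPair_apply (v w : V) (a b : Module.Dual ℝ V) :
    evalPair v w ![a, b] = a v * b w - b v * a w := by
  have huniv : (Finset.univ : Finset (Equiv.Perm (Fin 2)))
      = {Equiv.refl (Fin 2), Equiv.swap 0 1} := by decide
  rw [evalPair, MultilinearMap.alternatization_apply, huniv,
    Finset.sum_insert (by decide), Finset.sum_singleton]
  simp [Equiv.Perm.sign_swap, Matrix.cons_val_zero, Matrix.cons_val_one, sub_eq_add_neg]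

lemma asBilinForm_ιι (v w : V) (a b : Module.Dual ℝ V) :
    asBilinForm (ExteriorAlgebra.ι ℝ a * ExteriorAlgebra.ι ℝ b) v w
      = a v * b w - b v * a w := by
  rw [asBilinForm, ExteriorAlgebra.liftAlternating_ι_mul, ExteriorAlgebra.liftAlternating_ι,
    AlternatingMap.curryLeft_apply_apply]
  exact evalPair_apply v w a b

lemma omega_contract_aux (x : E) (hx : x ∈ ⋀[ℝ]^2 W) :
    ∃ B : V →ₗ[ℝ] Module.Dual ℝ V, (∀ v w, B v w = asBilinForm x v w) ∧
      ∀ (v : V) (y : E), contract (Module.Dual.eval ℝ V v) (x * y)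
        = ExteriorAlgebra.ι ℝ (B v) * y + x * contract (Module.Dual.eval ℝ V v) y := by
  refine pow_succ_induction (p := fun x => ∃ B : V →ₗ[ℝ] Module.Dual ℝ V,
      (∀ v w, B v w = asBilinForm x v w) ∧
      ∀ (v : V) (y : E), contract (Module.Dual.eval ℝ V v) (x * y)
        = ExteriorAlgebra.ι ℝ (B v) * y + x * contract (Module.Dual.eval ℝ V v) y)
    1 ?_ ?_ ?_ ?_ x hx
  · refine ⟨0, fun v w => by simp [asBilinForm], fun v y => by simp⟩
  · rintro x y ⟨B1, hB1, hc1⟩ ⟨B2, hB2, hc2⟩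
    refine ⟨B1 + B2, fun v w => ?_, fun v y' => ?_⟩
    · rw [asBilinForm_add]; simp [hB1, hB2]
    · simp only [add_mul, map_add, hc1, hc2, LinearMap.add_apply, map_add]
      abel
  · rintro r x ⟨B, hB, hc⟩
    refine ⟨r • B, fun v w => ?_, fun v y' => ?_⟩
    · rw [asBilinForm_smul]; simp [hB]
    · simp only [smul_mul_assoc, map_smul, hc, LinearMap.smul_apply, smul_add]
  · intro c y hy
    rw [show (⋀[ℝ]^1 W) = LinearMap.range (ExteriorAlgebra.ι ℝ : W →ₗ[ℝ] E) from pow_one _]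
      at hy
    obtain ⟨b, rfl⟩ := hy
    refine ⟨c.smulRight b - b.smulRight c, fun v w => ?_, fun v y' => ?_⟩
    · rw [asBilinForm_ιι]
      simp [LinearMap.smulRight_apply]
    · have e1 : Module.Dual.eval ℝ V v c = c v := rfl
      have e2 : Module.Dual.eval ℝ V v b = b v := rfl
      rw [mul_assoc, contract_ι_mul, contract_ι_mul]
      simp only [LinearMap.sub_apply, LinearMap.smulRight_apply, map_sub, map_smul, e1, e2,
        sub_mul, smul_mul_assoc, mul_sub, mul_smul_comm, mul_assoc]
      abel

lemma top_vanish [FiniteDimensional ℝ V] (k : ℕ) (hk : Module.finrank ℝ V < k) :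
    ∀ x ∈ ⋀[ℝ]^k W, x = 0 := by
  intro x hx
  rw [← ExteriorAlgebra.ιMulti_span_fixedDegree] at hx
  refine Submodule.span_induction ?_ rfl (fun a b _ _ ha hb => by rw [ha, hb, add_zero])
    (fun r a _ ha => by rw [ha, smul_zero]) hx
  rintro _ ⟨f, rfl⟩
  refine AlternatingMap.map_linearDependent _ f (fun hind => ?_)
  have := hind.fintype_card_le_finrank
  rw [Fintype.card_fin, Subspace.dual_finrank_eq] at this
  omega

lemma skew (ω : V →ₗ[ℝ] V →ₗ[ℝ] ℝ) (halt : ∀ v : V, ω v v = 0) (v w : V) :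
    ω v w = - ω w v := by
  have h := halt (v + w)
  simp only [map_add, LinearMap.add_apply, halt] at h
  linarith [h]

lemma core [FiniteDimensional ℝ V] (m : ℕ) (hm : 1 ≤ m)
    (hdim : Module.finrank ℝ V = 2 * m)
    (ω : V →ₗ[ℝ] V →ₗ[ℝ] ℝ)
    (halt : ∀ v : V, ω v v = 0)
    (hnondeg : ∀ v : V, (∀ w : V, ω v w = 0) → v = 0)
    (Ωe : E) (hmem : Ωe ∈ ⋀[ℝ]^2 W)
    (hstar : ∀ (v : V) (y : E), contract (Module.Dual.eval ℝ V v) (Ωe * y)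
      = ExteriorAlgebra.ι ℝ (ω v) * y + Ωe * contract (Module.Dual.eval ℝ V v) y) :
    (∀ x ∈ ⋀[ℝ]^(m-1) W, Ωe * x = 0 → x = 0) ∧
      (∀ γ ∈ ⋀[ℝ]^(m+1) W, ∃ x ∈ ⋀[ℝ]^(m-1) W, Ωe * x = γ) := by
  classical
  set n := Module.finrank ℝ V with hn
  have hn2m : n = 2 * m := hdim
  have hinj : Function.Injective ω := by
    intro v₁ v₂ h
    have h0 : v₁ - v₂ = 0 := hnondeg _ (fun w => by
      rw [map_sub, LinearMap.sub_apply, h, sub_self])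
    rwa [sub_eq_zero] at h0
  have hsurj : Function.Surjective ω :=
    (LinearMap.injective_iff_surjective_of_finrank_eq_finrank
      (Subspace.dual_finrank_eq).symm).mp hinj
  let e : V ≃ₗ[ℝ] Module.Dual ℝ V := LinearEquiv.ofBijective ω ⟨hinj, hsurj⟩
  let σ : Module.Dual ℝ V → V := fun f => e.symm f
  have hσ : ∀ f, ω (σ f) = f := fun f => e.apply_symm_apply f
  let b := Module.finBasis ℝ V
  let D : E →ₗ[ℝ] E := ∑ a : Fin n, (contract (Module.Dual.eval ℝ V (b a))) ∘ₗ
      (contract (Module.Dual.eval ℝ V (σ (b.dualBasis a))))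
  have hDapply : ∀ x : E, D x = ∑ a : Fin n, (contract (Module.Dual.eval ℝ V (b a)))
      ((contract (Module.Dual.eval ℝ V (σ (b.dualBasis a)))) x) := by
    intro x
    simp only [D, LinearMap.sum_apply, LinearMap.comp_apply]
  have hD2 : ∀ (k : ℕ) (x : E), x ∈ ⋀[ℝ]^(k+2) W → D x ∈ ⋀[ℝ]^k W := by
    intro k x hx
    rw [hDapply]
    refine Submodule.sum_mem _ (fun a _ => ?_)
    exact contract_mem_pow k _ _ (contract_mem_pow (k+1) _ x hx)
  have hD0 : ∀ x ∈ ⋀[ℝ]^0 W, D x = 0 := by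
    intro x hx
    rw [hDapply]
    refine Finset.sum_eq_zero (fun a _ => ?_)
    rw [contract_eq_zero_of_mem_pow_zero _ hx, map_zero]
  have hD1 : ∀ x ∈ ⋀[ℝ]^1 W, D x = 0 := by
    intro x hx
    rw [hDapply]
    refine Finset.sum_eq_zero (fun a _ => ?_)
    exact contract_eq_zero_of_mem_pow_zero _ (contract_mem_pow 0 _ x hx)
  have hcomm : ∀ (k : ℕ) (x : E), x ∈ ⋀[ℝ]^k W →
      D (Ωe * x) = Ωe * D x + (((n:ℝ) - 2*k)) • x := by
    intro k x hx
    have hT1 : ∑ a : Fin n, ExteriorAlgebra.ι ℝ (b.dualBasis a) *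
        contract (Module.Dual.eval ℝ V (b a)) x = (k:ℝ) • x := by
      refine euler_op _ _ ?_ k x hx
      intro f
      have hc : ∀ a : Fin n, b.dualBasis a = b.coord a := fun a => by
        rw [Module.Basis.coe_dualBasis]
      simp_rw [hc]
      exact b.sum_dual_apply_smul_coord f
    have hT2 : ∑ a : Fin n, ExteriorAlgebra.ι ℝ (-(ω (b a))) *
        contract (Module.Dual.eval ℝ V (σ (b.dualBasis a))) x = (k:ℝ) • x := by
      refine euler_op _ _ ?_ k x hx
      intro f
      obtain ⟨z, rfl⟩ := hsurj f
      have h2 : ∀ a : Fin n, (Module.Dual.eval ℝ V (σ (b.dualBasis a))) (ω z)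
          = - (b.dualBasis a z) := by
        intro a
        have : (Module.Dual.eval ℝ V (σ (b.dualBasis a))) (ω z)
            = ω z (σ (b.dualBasis a)) := rfl
        rw [this, skew ω halt z (σ (b.dualBasis a))]
        rw [LinearMap.congr_fun (hσ (b.dualBasis a)) z]
      have h3 : ∀ a : Fin n, (Module.Dual.eval ℝ V (σ (b.dualBasis a))) (ω z) • (-(ω (b a)))
          = ω (b.repr z a • b a) := by
        intro a
        rw [h2 a, neg_smul_neg, map_smul]
        congr 1
        rw [Module.Basis.coe_dualBasis, Module.Basis.coord_apply]
      rw [Finset.sum_congr rfl (fun a _ => h3 a), ← map_sum, b.sum_repr z]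
    have key : ∀ a : Fin n,
        (contract (Module.Dual.eval ℝ V (b a)))
          ((contract (Module.Dual.eval ℝ V (σ (b.dualBasis a)))) (Ωe * x))
        = (b.dualBasis a) (b a) • x
          - ExteriorAlgebra.ι ℝ (b.dualBasis a) * contract (Module.Dual.eval ℝ V (b a)) x
          + ExteriorAlgebra.ι ℝ (ω (b a)) *
              contract (Module.Dual.eval ℝ V (σ (b.dualBasis a))) x
          + Ωe * (contract (Module.Dual.eval ℝ V (b a))
              ((contract (Module.Dual.eval ℝ V (σ (b.dualBasis a)))) x)) := by
      intro a
      rw [hstar, hσ, map_add, contract_ι_mul, hstar]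
      have he : (Module.Dual.eval ℝ V (b a)) (b.dualBasis a) = (b.dualBasis a) (b a) := rfl
      rw [he]
      abel
    rw [hDapply (Ωe * x)]
    rw [Finset.sum_congr rfl (fun a _ => key a)]
    rw [Finset.sum_add_distrib, Finset.sum_add_distrib, Finset.sum_sub_distrib]
    have hs1 : ∑ a : Fin n, (b.dualBasis a) (b a) • x = (n : ℝ) • x := by
      have : ∀ a : Fin n, (b.dualBasis a) (b a) • x = x := by
        intro a
        rw [Module.Basis.dualBasis_apply_self, if_pos rfl, one_smul]
      rw [Finset.sum_congr rfl (fun a _ => this a), Finset.sum_const, Finset.card_univ,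
        Fintype.card_fin, ← Nat.cast_smul_eq_nsmul ℝ]
    have hs2 : ∑ a : Fin n, ExteriorAlgebra.ι ℝ (ω (b a)) *
        contract (Module.Dual.eval ℝ V (σ (b.dualBasis a))) x = -((k:ℝ) • x) := by
      rw [← hT2]
      rw [← Finset.sum_neg_distrib]
      refine Finset.sum_congr rfl (fun a _ => ?_)
      rw [map_neg, neg_mul, neg_neg]
    have hs4 : ∑ a : Fin n, Ωe * (contract (Module.Dual.eval ℝ V (b a))
        ((contract (Module.Dual.eval ℝ V (σ (b.dualBasis a)))) x)) = Ωe * D x := by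
      rw [← Finset.mul_sum, hDapply]
    rw [hs1, hT1, hs2, hs4]
    module
  have hΩpow : ∀ (r k : ℕ) (x : E), x ∈ ⋀[ℝ]^k W → Ωe^r * x ∈ ⋀[ℝ]^(k + 2*r) W := by
    intro r
    induction r with
    | zero =>
      intro k x hx
      rw [pow_zero, one_mul]
      have h : k + 2*0 = k := by omega
      rw [h]
      exact hx
    | succ r ih =>
      intro k x hx
      have h1 : Ωe^(r+1) * x = Ωe * (Ωe^r * x) := by rw [pow_succ', mul_assoc]
      rw [h1]
      have h2 := mul_mem_pow hmem (ih k x hx)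
      have hcast : 2 + (k + 2*r) = k + 2*(r+1) := by omega
      rwa [hcast] at h2
  have hcommpow : ∀ (r k : ℕ) (x : E), x ∈ ⋀[ℝ]^k W →
      D (Ωe^(r+1) * x) = Ωe^(r+1) * D x
        + ((((r:ℝ)+1) * ((n:ℝ) - 2*(k:ℝ) - 2*(r:ℝ)))) • (Ωe^r * x) := by
    intro r
    induction r with
    | zero =>
      intro k x hx
      rw [pow_one, pow_zero, one_mul, hcomm k x hx]
      module
    | succ r ih =>
      intro k x hx
      have hmem1 : Ωe^(r+1) * x ∈ ⋀[ℝ]^(k+2*(r+1)) W := hΩpow (r+1) k x hx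
      have step1 : D (Ωe^(r+1+1) * x) = D (Ωe * (Ωe^(r+1) * x)) := by
        rw [← mul_assoc, ← pow_succ']
      rw [step1, hcomm _ _ hmem1, ih k x hx]
      have hre : Ωe * (Ωe^(r+1) * D x + (((r:ℝ)+1) * ((n:ℝ) - 2*(k:ℝ) - 2*(r:ℝ))) •
          (Ωe^r * x)) = Ωe^(r+1+1) * D x + (((r:ℝ)+1) * ((n:ℝ) - 2*(k:ℝ) - 2*(r:ℝ))) •
          (Ωe^(r+1) * x) := by
        rw [mul_add, mul_smul_comm, ← mul_assoc, ← pow_succ', ← mul_assoc, ← pow_succ']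
      rw [hre]
      push_cast
      module
  have hinj1 : ∀ x ∈ ⋀[ℝ]^(m-1) W, Ωe * x = 0 → x = 0 := by
    intro x hxmem hx0
    have main : ∀ (j k : ℕ), m - 1 = k + 2*j →
        (D^[j]) x ∈ ⋀[ℝ]^k W ∧ ∃ c : ℝ, c ≠ 0 ∧ Ωe^j * (D^[j]) x = c • x := by
      intro j
      induction j with
      | zero =>
        intro k hk
        have hkm : k = m - 1 := by omega
        subst hkm
        refine ⟨by simpa using hxmem, 1, one_ne_zero, by simp⟩
      | succ j ih =>
        intro k hk
        obtain ⟨hmemj, c, hc0, hcx⟩ := ih (k+2) (by omega)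
        have hiter : (D^[j+1]) x = D ((D^[j]) x) := Function.iterate_succ_apply' D j x
        have hmem' : (D^[j+1]) x ∈ ⋀[ℝ]^k W := by rw [hiter]; exact hD2 k _ hmemj
        refine ⟨hmem', ?_⟩
        have hcp := hcommpow j (k+2) ((D^[j]) x) hmemj
        have hz : Ωe^(j+1) * (D^[j]) x = 0 := by
          rw [pow_succ', mul_assoc, hcx, mul_smul_comm, hx0, smul_zero]
        rw [hz, map_zero, hcx] at hcp
        refine ⟨-((((j:ℝ)+1) * ((n:ℝ) - 2*((k:ℕ)+2:ℕ) - 2*(j:ℝ))) * c), ?_, ?_⟩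
        · have hmk : m = k + 2*j + 3 := by omega
          have hval : (n:ℝ) - 2*((k:ℕ)+2:ℕ) - 2*(j:ℝ) = 2*(j:ℝ) + 2 := by
            rw [hn2m, hmk]; push_cast; ring
          rw [hval]
          apply neg_ne_zero.mpr
          apply mul_ne_zero (mul_ne_zero ?_ ?_) hc0
          · positivity
          · positivity
        · rw [hiter]
          have := eq_neg_of_add_eq_zero_left hcp.symm
          rw [this, smul_smul, ← neg_smul]
    obtain ⟨hmemf, c, hc0, hcx⟩ := main ((m-1)/2) ((m-1) % 2) (by omega)
    have hDf : D ((D^[(m-1)/2]) x) = 0 := by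
      have hk01 : (m-1) % 2 = 0 ∨ (m-1) % 2 = 1 := by omega
      rcases hk01 with h|h
      · rw [h] at hmemf; exact hD0 _ hmemf
      · rw [h] at hmemf; exact hD1 _ hmemf
    have hcp := hcommpow ((m-1)/2) ((m-1)%2) ((D^[(m-1)/2]) x) hmemf
    have hz : Ωe^((m-1)/2+1) * (D^[(m-1)/2]) x = 0 := by
      rw [pow_succ', mul_assoc, hcx, mul_smul_comm, hx0, smul_zero]
    rw [hz, map_zero, hDf, mul_zero, hcx] at hcp
    have hval : (n:ℝ) - 2*(((m-1)%2 : ℕ):ℝ) - 2*(((m-1)/2 : ℕ):ℝ)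
        = 2*(((m-1)/2 : ℕ):ℝ) + 2 := by
      have hnat : n = 2*((m-1)%2 + 2*((m-1)/2) + 1) := by omega
      rw [hnat]; push_cast; ring
    rw [hval] at hcp
    have hc2 : (((((m-1)/2 : ℕ):ℝ)+1) * (2*(((m-1)/2 : ℕ):ℝ) + 2)) ≠ 0 := by positivity
    have hz2 := hcp.symm
    rw [zero_add, smul_smul] at hz2
    rcases smul_eq_zero.mp hz2 with h|h
    · exact absurd h (mul_ne_zero hc2 hc0)
    · exact h
  have hDinj : ∀ y ∈ ⋀[ℝ]^(m+1) W, D y = 0 → y = 0 := by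
    intro y hy hDy
    have down : ∀ r : ℕ, Ωe^(r+1) * y = 0 → Ωe^r * y = 0 := by
      intro r h0
      have hcp := hcommpow r (m+1) y hy
      rw [hDy, mul_zero, h0, map_zero] at hcp
      have hval : (n:ℝ) - 2*(((m+1):ℕ):ℝ) - 2*(r:ℝ) = -(2*(r:ℝ)+2) := by
        rw [hn2m]; push_cast; ring
      rw [hval] at hcp
      have hc2 : ((r:ℝ)+1) * (-(2*(r:ℝ)+2)) ≠ 0 := by
        apply mul_ne_zero (by positivity)
        apply neg_ne_zero.mpr (by positivity)
      have hz2 := hcp.symm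
      rw [zero_add] at hz2
      rcases smul_eq_zero.mp hz2 with h|h
      · exact absurd h hc2
      · exact h
    have top : Ωe^m * y = 0 := by
      refine top_vanish _ ?_ _ (hΩpow m (m+1) y hy)
      omega
    have alldown : ∀ r : ℕ, Ωe^(m - r) * y = 0 := by
      intro r
      induction r with
      | zero => simpa using top
      | succ r ih =>
        by_cases hr : r < m
        · have h1 : m - r = (m - (r+1)) + 1 := by omega
          rw [h1] at ih
          exact down _ ih
        · have h1 : m - (r+1) = m - r := by omega
          rw [h1]; exact ih
    have hfin := alldown m
    rwa [Nat.sub_self, pow_zero, one_mul] at hfin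
  have hfgr : (LinearMap.range (ExteriorAlgebra.ι ℝ :
      Module.Dual ℝ V →ₗ[ℝ] E)).FG := Module.Finite.iff_fg.mp inferInstance
  haveI hfd : FiniteDimensional ℝ (⋀[ℝ]^(m+1) W) := Module.Finite.iff_fg.mpr (hfgr.pow _)
  have hmemD : ∀ γ ∈ ⋀[ℝ]^(m+1) W, D γ ∈ ⋀[ℝ]^(m-1) W := by
    intro γ hγ
    refine hD2 (m-1) γ ?_
    have h1 : m - 1 + 2 = m + 1 := by omega
    rw [h1]; exact hγ
  have hmemΦ : ∀ γ : (⋀[ℝ]^(m+1) W), ((LinearMap.mulLeft ℝ Ωe) ∘ₗ D ∘ₗ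
      (Submodule.subtype _)) γ ∈ ⋀[ℝ]^(m+1) W := by
    intro γ
    have h1 := mul_mem_pow hmem (hmemD γ γ.2)
    have h2 : 2 + (m - 1) = m + 1 := by omega
    rw [h2] at h1
    exact h1
  let Φ : (⋀[ℝ]^(m+1) W) →ₗ[ℝ] (⋀[ℝ]^(m+1) W) :=
    LinearMap.codRestrict _ ((LinearMap.mulLeft ℝ Ωe) ∘ₗ D ∘ₗ (Submodule.subtype _)) hmemΦ
  have hΦapply : ∀ γ : (⋀[ℝ]^(m+1) W), (Φ γ : E) = Ωe * D (γ : E) := by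
    intro γ
    rfl
  have hΦinj : Function.Injective Φ := by
    intro γ₁ γ₂ hΦeq
    have h1 : Ωe * D (γ₁ : E) = Ωe * D (γ₂ : E) := by
      rw [← hΦapply, ← hΦapply, hΦeq]
    have h2 : Ωe * (D ((γ₁ : E) - (γ₂ : E))) = 0 := by
      rw [map_sub, mul_sub, h1, sub_self]
    have h3 : ((γ₁ : E) - (γ₂ : E)) ∈ ⋀[ℝ]^(m+1) W :=
      Submodule.sub_mem _ γ₁.2 γ₂.2
    have h4 : D ((γ₁ : E) - (γ₂ : E)) = 0 :=
      hinj1 _ (hmemD _ h3) h2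
    have h5 : (γ₁ : E) - (γ₂ : E) = 0 := hDinj _ h3 h4
    exact Subtype.ext (by rw [← sub_eq_zero]; exact h5)
  have hΦsurj : Function.Surjective Φ :=
    (LinearMap.injective_iff_surjective).mp hΦinj
  refine ⟨hinj1, ?_⟩
  intro γ hγ
  obtain ⟨γ', hγ'⟩ := hΦsurj ⟨γ, hγ⟩
  refine ⟨D (γ' : E), hmemD _ γ'.2, ?_⟩
  have := congrArg (Subtype.val) hγ'
  rw [hΦapply] at this
  exact this

end WedgeAux

/-- if `dim V = 2m`, `m ≥ 1`, and `ω` is a nondegenerate alternating bilinear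
form on `V` regarded as `Ω ∈ Λ²V*`, then exterior multiplication
`ε(ω) : Λ^{m-1} V* → Λ^{m+1} V*`, `α ↦ ω ∧ α`, is a linear isomorphism (it is injective and
onto `Λ^{m+1} V*`). -/
theorem wedge_mul_middle_bijective {V : Type*} [AddCommGroup V] [Module ℝ V]
    [FiniteDimensional ℝ V] (m : ℕ) (hm : 1 ≤ m)
    (hdim : Module.finrank ℝ V = 2 * m)
    (ω : V →ₗ[ℝ] V →ₗ[ℝ] ℝ)
    (halt : ∀ v : V, ω v v = 0)
    (hnondeg : ∀ v : V, (∀ w : V, ω v w = 0) → v = 0)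
    (Ω : ⋀[ℝ]^2 (Module.Dual ℝ V))
    (hΩ : ∀ v w : V, asBilinForm (Ω : ExteriorAlgebra ℝ (Module.Dual ℝ V)) v w = ω v w) :
    Function.Injective (fun α : ⋀[ℝ]^(m - 1) (Module.Dual ℝ V) =>
      (Ω : ExteriorAlgebra ℝ (Module.Dual ℝ V)) * (α : ExteriorAlgebra ℝ (Module.Dual ℝ V)))
    ∧ ∀ γ : ⋀[ℝ]^(m + 1) (Module.Dual ℝ V), ∃ α : ⋀[ℝ]^(m - 1) (Module.Dual ℝ V),
      (Ω : ExteriorAlgebra ℝ (Module.Dual ℝ V)) * (α : ExteriorAlgebra ℝ (Module.Dual ℝ V))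
        = (γ : ExteriorAlgebra ℝ (Module.Dual ℝ V)) := by
  classical
  obtain ⟨B, hB, hc⟩ := WedgeAux.omega_contract_aux
    (Ω : ExteriorAlgebra ℝ (Module.Dual ℝ V)) Ω.2
  have hBω : ∀ v, B v = ω v := fun v => LinearMap.ext fun w => (hB v w).trans (hΩ v w)
  have hstar : ∀ (v : V) (y : ExteriorAlgebra ℝ (Module.Dual ℝ V)),
      WedgeAux.contract (Module.Dual.eval ℝ V v)
          ((Ω : ExteriorAlgebra ℝ (Module.Dual ℝ V)) * y)
        = ExteriorAlgebra.ι ℝ (ω v) * y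
          + (Ω : ExteriorAlgebra ℝ (Module.Dual ℝ V)) *
              WedgeAux.contract (Module.Dual.eval ℝ V v) y := by
    intro v y
    rw [hc v y, hBω]
  obtain ⟨h1, h2⟩ := WedgeAux.core m hm hdim ω halt hnondeg _ Ω.2 hstar
  constructor
  · intro α β hαβ
    simp only at hαβ
    have h3 : (Ω : ExteriorAlgebra ℝ (Module.Dual ℝ V)) *
        ((α : ExteriorAlgebra ℝ (Module.Dual ℝ V))
          - (β : ExteriorAlgebra ℝ (Module.Dual ℝ V))) = 0 := by
      rw [mul_sub, hαβ, sub_self]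
    have h4 : ((α : ExteriorAlgebra ℝ (Module.Dual ℝ V))
        - (β : ExteriorAlgebra ℝ (Module.Dual ℝ V))) ∈ ⋀[ℝ]^(m-1) (Module.Dual ℝ V) :=
      Submodule.sub_mem _ α.2 β.2
    have h5 := h1 _ h4 h3
    exact Subtype.ext (sub_eq_zero.mp h5)
  · intro γ
    obtain ⟨x, hxmem, hx⟩ := h2 ↑γ γ.2
    exact ⟨⟨x, hxmem⟩, hx⟩
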